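/- Fix x₀ in (0, π/2) and let b = -log(x₀/tan x₀)/x₀². Then for all x in (0, x₀), e^(-b·x²) < x/tan x. -/

import Mathlib

open Real Set


lemma my_sin_ge (x : ℝ) (hx : 0 ≤ x) : x - x^3/6 ≤ Real.sin x := by
  have key : MonotoneOn (fun t : ℝ => Real.sin t - t + t^3/6) (Set.Ici 0) := by
    have hd : ∀ t : ℝ, HasDerivAt (fun t : ℝ => Real.sin t - t + t^3/6)
        (Real.cos t - 1 + 3 * t^2 / 6) t := by
      intro t
      exact ((Real.hasDerivAt_sin t).sub (hasDerivAt_id t)).add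
        ((hasDerivAt_pow 3 t).div_const 6)
    apply monotoneOn_of_deriv_nonneg (convex_Ici 0)
    · exact (Continuous.continuousOn (by continuity))
    · intro t ht
      exact (hd t).differentiableAt.differentiableWithinAt
    · intro t ht
      rw [(hd t).deriv]
      nlinarith [Real.one_sub_sq_div_two_le_cos (x := t)]
  have h0 := key (Set.self_mem_Ici) (Set.mem_Ici.2 hx) hx
  simp at h0
  linarith

lemma my_cos_le (x : ℝ) (hx : 0 ≤ x) : Real.cos x ≤ 1 - x^2/2 + x^4/24 := by
  have key : MonotoneOn (fun t : ℝ => 1 - t^2/2 + t^4/24 - Real.cos t) (Set.Ici 0) := by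
    have hd : ∀ t : ℝ, HasDerivAt (fun t : ℝ => 1 - t^2/2 + t^4/24 - Real.cos t)
        (0 - 2 * t / 2 + 4 * t^3 / 24 - -Real.sin t) t := by
      intro t
      have h := (((hasDerivAt_const t (1:ℝ)).sub ((hasDerivAt_pow 2 t).div_const 2)).add
        ((hasDerivAt_pow 4 t).div_const 24)).sub (Real.hasDerivAt_cos t)
      exact h.congr_deriv (by norm_num)
    apply monotoneOn_of_deriv_nonneg (convex_Ici 0)
    · exact (Continuous.continuousOn (by continuity))
    · intro t ht
      exact (hd t).differentiableAt.differentiableWithinAt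
    · intro t ht
      rw [(hd t).deriv]
      have ht' : (0:ℝ) ≤ t := le_of_lt (by simpa using ht)
      nlinarith [my_sin_ge t ht']
  have h0 := key (Set.self_mem_Ici) (Set.mem_Ici.2 hx) hx
  simp at h0
  linarith

lemma my_sin_le (x : ℝ) (hx : 0 ≤ x) : Real.sin x ≤ x - x^3/6 + x^5/120 := by
  have key : MonotoneOn (fun t : ℝ => t - t^3/6 + t^5/120 - Real.sin t) (Set.Ici 0) := by
    have hd : ∀ t : ℝ, HasDerivAt (fun t : ℝ => t - t^3/6 + t^5/120 - Real.sin t)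
        (1 - 3 * t^2 / 6 + 5 * t^4 / 120 - Real.cos t) t := by
      intro t
      have h := (((hasDerivAt_id t).sub ((hasDerivAt_pow 3 t).div_const 6)).add
        ((hasDerivAt_pow 5 t).div_const 120)).sub (Real.hasDerivAt_sin t)
      exact h.congr_deriv (by norm_num)
    apply monotoneOn_of_deriv_nonneg (convex_Ici 0)
    · exact (Continuous.continuousOn (by continuity))
    · intro t ht
      exact (hd t).differentiableAt.differentiableWithinAt
    · intro t ht
      rw [(hd t).deriv]
      have ht' : (0:ℝ) ≤ t := le_of_lt (by simpa using ht)
      nlinarith [my_cos_le t ht']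
  have h0 := key (Set.self_mem_Ici) (Set.mem_Ici.2 hx) hx
  simp at h0
  linarith
lemma key_trig {s : ℝ} (hs : s ∈ Set.Ioo 0 Real.pi) :
    s * Real.sin s + s^2 * Real.cos s < 2 * Real.sin s ^ 2 := by
  obtain ⟨hs0, hsπ⟩ := hs
  rcases le_or_gt (s^2) 6 with h6 | h6
  · -- small case: Taylor bounds
    have h1 := my_sin_ge s hs0.le
    have h2 := my_sin_le s hs0.le
    have h3 := my_cos_le s hs0.le
    have hnn : 0 ≤ s - s^3/6 := by nlinarith
    have hsq : (s - s^3/6)^2 ≤ Real.sin s ^ 2 := by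
      nlinarith [Real.sin_nonneg_of_nonneg_of_le_pi hs0.le hsπ.le]
    nlinarith [pow_pos hs0 6]
  · -- large case: s > √6
    have hsqrt6 : (2.449 : ℝ) < s := by nlinarith
    have hcos6 : Real.cos (Real.sqrt 6) ≤ -(1/2) := by
      have h := my_cos_le (Real.sqrt 6) (Real.sqrt_nonneg 6)
      have h2 : Real.sqrt 6 ^ 2 = 6 := Real.sq_sqrt (by norm_num)
      nlinarith
    have hs6 : Real.sqrt 6 < s := by
      have : Real.sqrt 6 < Real.sqrt (s^2) := by
        apply Real.sqrt_lt_sqrt (by norm_num) h6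
      rwa [Real.sqrt_sq hs0.le] at this
    have hsqrt6lt : Real.sqrt 6 ≤ Real.pi := by
      have : Real.sqrt 6 < 2.5 := by
        rw [show (2.5:ℝ) = Real.sqrt (2.5^2) from (Real.sqrt_sq (by norm_num)).symm]
        apply Real.sqrt_lt_sqrt (by norm_num); norm_num
      linarith [Real.pi_gt_d6]
    have hcoss : Real.cos s ≤ -(1/2) := by
      rcases eq_or_lt_of_le hs6.le with h | h
      · rw [← h]; exact hcos6
      · exact le_trans (le_of_lt (Real.strictAntiOn_cos
          ⟨Real.sqrt_nonneg 6, hsqrt6lt⟩ ⟨by linarith, hsπ.le⟩ h)) hcos6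
    -- sin s ≤ π - s
    have hsin_le : Real.sin s ≤ Real.pi - s := by
      have := Real.sin_lt (x := Real.pi - s) (by linarith)
      rw [Real.sin_pi_sub] at this
      linarith
    have hsinpos : 0 < Real.sin s := Real.sin_pos_of_pos_of_lt_pi hs0 hsπ
    have hπ : Real.pi < 3.1416 := by linarith [Real.pi_lt_d2, Real.pi_lt_d6]
    have hsq6' : (2.449:ℝ) < Real.sqrt 6 := by
      rw [show (2.449:ℝ) = Real.sqrt (2.449^2) from (Real.sqrt_sq (by norm_num)).symm]
      apply Real.sqrt_lt_sqrt (by positivity); norm_num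
    -- s * sin s ≤ π (π - s) < π (π - 2.449) < 3 ≤ s²/2 ≤ -s² cos s
    have h1 : s * Real.sin s ≤ Real.pi * (Real.pi - s) := by
      apply mul_le_mul hsπ.le hsin_le hsinpos.le Real.pi_pos.le
    have h2 : Real.pi * (Real.pi - s) < 3 := by nlinarith
    have h3 : s^2 * Real.cos s ≤ -(s^2/2) := by nlinarith
    have h4 : (3:ℝ) ≤ s^2/2 := by nlinarith
    nlinarith [sq_nonneg (Real.sin s)]
noncomputable def pf (t : ℝ) : ℝ :=
  2*t / Real.sin (2*t) - 1 - 2 * Real.log (Real.tan t) + 2 * Real.log t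

lemma basic_facts {x : ℝ} (hx : x ∈ Set.Ioo 0 (Real.pi/2)) :
    0 < Real.cos x ∧ 0 < Real.sin x ∧ 0 < Real.tan x ∧ 0 < Real.sin (2*x) := by
  obtain ⟨h0, h1⟩ := hx
  refine ⟨Real.cos_pos_of_mem_Ioo ⟨by linarith, h1⟩,
    Real.sin_pos_of_pos_of_lt_pi h0 (by linarith [Real.pi_pos]),
    Real.tan_pos_of_pos_of_lt_pi_div_two h0 h1,
    Real.sin_pos_of_pos_of_lt_pi (by linarith) (by linarith)⟩

lemma hasDerivAt_pf {x : ℝ} (hx : x ∈ Set.Ioo 0 (Real.pi/2)) :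
    HasDerivAt pf
      (2/x - 2/Real.sin (2*x) - 4*x*Real.cos (2*x) / (Real.sin (2*x))^2) x := by
  obtain ⟨hcos, hsin, htan, hsin2⟩ := basic_facts hx
  obtain ⟨hx0, hx2⟩ := hx
  have hs2 : HasDerivAt (fun t : ℝ => Real.sin (2*t)) (Real.cos (2*x) * 2) x := by
    have := (Real.hasDerivAt_sin (2*x)).comp x ((hasDerivAt_id x).const_mul 2)
    exact this.congr_deriv (by simp)
  have h2t : HasDerivAt (fun t : ℝ => 2*t) 2 x := by
    simpa using (hasDerivAt_id x).const_mul 2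
  have hdiv : HasDerivAt (fun t : ℝ => 2*t / Real.sin (2*t))
      ((2 * Real.sin (2*x) - 2*x * (Real.cos (2*x) * 2)) / (Real.sin (2*x))^2) x :=
    h2t.div hs2 hsin2.ne'
  have hlt : HasDerivAt (fun t : ℝ => Real.log (Real.tan t))
      ((1 / Real.cos x ^ 2) / Real.tan x) x :=
    (Real.hasDerivAt_tan hcos.ne').log htan.ne'
  have hll : HasDerivAt Real.log x⁻¹ x := Real.hasDerivAt_log hx0.ne'
  have h : HasDerivAt pf
      ((2 * Real.sin (2*x) - 2*x * (Real.cos (2*x) * 2)) / (Real.sin (2*x))^2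
        - 0 - 2 * ((1 / Real.cos x ^ 2) / Real.tan x) + 2 * x⁻¹) x :=
    (((hdiv.sub (hasDerivAt_const x 1)).sub (hlt.const_mul 2)).add (hll.const_mul 2))
  convert h using 1
  rw [Real.tan_eq_sin_div_cos, Real.sin_two_mul]
  field_simp
  ring

lemma deriv_pf_pos {x : ℝ} (hx : x ∈ Set.Ioo 0 (Real.pi/2)) :
    0 < 2/x - 2/Real.sin (2*x) - 4*x*Real.cos (2*x) / (Real.sin (2*x))^2 := by
  obtain ⟨hcos, hsin, htan, hsin2⟩ := basic_facts hx
  obtain ⟨hx0, hx2⟩ := hx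
  have hkey := key_trig (s := 2*x) ⟨by linarith, by linarith⟩
  have heq : 2/x - 2/Real.sin (2*x) - 4*x*Real.cos (2*x) / (Real.sin (2*x))^2
      = (2 * Real.sin (2*x)^2 - 2*x*Real.sin (2*x) - 4*x^2*Real.cos (2*x))
        / (x * Real.sin (2*x)^2) := by
    field_simp
  rw [heq]
  apply div_pos _ (by positivity)
  nlinarith

lemma pf_strictMono : StrictMonoOn pf (Set.Ioo 0 (Real.pi/2)) := by
  apply strictMonoOn_of_deriv_pos (convex_Ioo _ _)
  · exact fun x hx => (hasDerivAt_pf hx).continuousAt.continuousWithinAt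
  · intro x hx
    rw [interior_Ioo] at hx
    rw [(hasDerivAt_pf hx).deriv]
    exact deriv_pf_pos hx

lemma pf_tendsto : Filter.Tendsto pf (nhdsWithin 0 (Set.Ioi 0)) (nhds 0) := by
  have hslope_sin : Filter.Tendsto (fun t : ℝ => Real.sin t / t)
      (nhdsWithin 0 {(0:ℝ)}ᶜ) (nhds 1) := by
    have h := hasDerivAt_iff_tendsto_slope.1 (Real.hasDerivAt_sin 0)
    rw [Real.cos_zero] at h
    apply h.congr'
    filter_upwards [self_mem_nhdsWithin] with t ht
    simp [slope_def_field, div_eq_inv_mul]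
  have hslope_tan : Filter.Tendsto (fun t : ℝ => Real.tan t / t)
      (nhdsWithin 0 {(0:ℝ)}ᶜ) (nhds 1) := by
    have h := hasDerivAt_iff_tendsto_slope.1 (Real.hasDerivAt_tan (x := 0)
      (by rw [Real.cos_zero]; norm_num))
    rw [Real.cos_zero] at h
    norm_num at h
    apply h.congr'
    filter_upwards [self_mem_nhdsWithin] with t ht
    simp [slope_def_field, Real.tan_zero, div_eq_inv_mul]
  -- 2t / sin(2t) → 1 on Ioi 0
  have hmul2 : Filter.Tendsto (fun t : ℝ => 2*t) (nhdsWithin 0 (Set.Ioi 0))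
      (nhdsWithin 0 {(0:ℝ)}ᶜ) := by
    apply tendsto_nhdsWithin_of_tendsto_nhds_of_eventually_within
    · have h0 : Filter.Tendsto (fun t : ℝ => 2*t) (nhds (0:ℝ)) (nhds (0:ℝ)) := by
        exact (continuous_mul_left (2:ℝ)).tendsto' 0 0 (by simp)
      exact h0.mono_left nhdsWithin_le_nhds
    · filter_upwards [self_mem_nhdsWithin] with t ht
      simp only [Set.mem_compl_iff, Set.mem_singleton_iff]
      have : (0:ℝ) < t := ht
      positivity
  have h1 : Filter.Tendsto (fun t : ℝ => 2*t / Real.sin (2*t))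
      (nhdsWithin 0 (Set.Ioi 0)) (nhds 1) := by
    have := ((hslope_sin.comp hmul2).inv₀ one_ne_zero)
    norm_num at this
    apply this.congr
    intro t
    simp [Function.comp, inv_div]
  have hIoo : Set.Ioo (0:ℝ) (Real.pi/2) ∈ nhdsWithin 0 (Set.Ioi 0) :=
    Ioo_mem_nhdsGT_of_mem (by constructor <;> [rfl; positivity])
  have h2 : Filter.Tendsto (fun t : ℝ => Real.log (Real.tan t / t))
      (nhdsWithin 0 (Set.Ioi 0)) (nhds 0) := by
    have hcomp : Filter.Tendsto (fun t : ℝ => Real.tan t / t)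
        (nhdsWithin 0 (Set.Ioi 0)) (nhds 1) :=
      hslope_tan.mono_left (nhdsWithin_mono 0 (fun t ht => ne_of_gt ht))
    have hlog := (Real.continuousAt_log (x := 1) one_ne_zero).tendsto
    rw [Real.log_one] at hlog
    exact hlog.comp hcomp
  have heq : ∀ᶠ t in nhdsWithin 0 (Set.Ioi 0),
      2*t / Real.sin (2*t) - 1 - 2 * Real.log (Real.tan t / t) = pf t := by
    filter_upwards [hIoo] with t ht
    obtain ⟨hcos, hsin, htan, hsin2⟩ := basic_facts ht
    unfold pf
    rw [Real.log_div htan.ne' ht.1.ne']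
    ring
  have := ((h1.sub tendsto_const_nhds).sub (h2.const_mul 2)).congr' heq
  norm_num at this
  convert this using 2

lemma pf_pos {x : ℝ} (hx : x ∈ Set.Ioo 0 (Real.pi/2)) : 0 < pf x := by
  obtain ⟨hx0, hx2⟩ := hx
  have hhalf : x/2 ∈ Set.Ioo 0 (Real.pi/2) := ⟨by linarith, by linarith⟩
  have hle : 0 ≤ pf (x/2) := by
    apply le_of_tendsto pf_tendsto
    filter_upwards [Ioo_mem_nhdsGT_of_mem
      (show (0:ℝ) ∈ Set.Ico (0:ℝ) (x/2) from ⟨le_refl _, by linarith⟩)] with t ht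
    exact (pf_strictMono ⟨ht.1, by linarith [ht.2, Real.pi_pos]⟩ hhalf ht.2).le
  have := pf_strictMono hhalf ⟨hx0, hx2⟩ (by linarith)
  linarith

noncomputable def gf (t : ℝ) : ℝ := (Real.log (Real.tan t) - Real.log t) / t^2

lemma hasDerivAt_gf {x : ℝ} (hx : x ∈ Set.Ioo 0 (Real.pi/2)) :
    HasDerivAt gf
      (((2/Real.sin (2*x) - 1/x) * x^2 -
        (Real.log (Real.tan x) - Real.log x) * (2*x)) / (x^2)^2) x := by
  obtain ⟨hcos, hsin, htan, hsin2⟩ := basic_facts hx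
  obtain ⟨hx0, hx2⟩ := hx
  have hlt : HasDerivAt (fun t : ℝ => Real.log (Real.tan t))
      ((1 / Real.cos x ^ 2) / Real.tan x) x :=
    (Real.hasDerivAt_tan hcos.ne').log htan.ne'
  have hll : HasDerivAt Real.log x⁻¹ x := Real.hasDerivAt_log hx0.ne'
  have hnum : HasDerivAt (fun t : ℝ => Real.log (Real.tan t) - Real.log t)
      (2/Real.sin (2*x) - 1/x) x := by
    have h := hlt.sub hll
    refine h.congr_deriv ?_
    rw [Real.tan_eq_sin_div_cos, Real.sin_two_mul]
    field_simp
  have hden : HasDerivAt (fun t : ℝ => t^2) (2*x) x := by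
    simpa [mul_comm] using hasDerivAt_pow 2 x
  exact hnum.div hden (by positivity)

lemma gf_strictMono : StrictMonoOn gf (Set.Ioo 0 (Real.pi/2)) := by
  apply strictMonoOn_of_deriv_pos (convex_Ioo _ _)
  · exact fun x hx => (hasDerivAt_gf hx).continuousAt.continuousWithinAt
  · intro x hx
    rw [interior_Ioo] at hx
    rw [(hasDerivAt_gf hx).deriv]
    obtain ⟨hcos, hsin, htan, hsin2⟩ := basic_facts hx
    obtain ⟨hx0, hx2⟩ := hx
    have hp := pf_pos ⟨hx0, hx2⟩
    unfold pf at hp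
    apply div_pos _ (by positivity)
    have heq : (2/Real.sin (2*x) - 1/x) * x^2 -
        (Real.log (Real.tan x) - Real.log x) * (2*x)
        = x * (2*x / Real.sin (2*x) - 1 - 2 * Real.log (Real.tan x)
            + 2 * Real.log x) := by
      field_simp
      ring
    rw [heq]
    positivity

theorem stmt_10 (x₀ : ℝ) (hx₀ : x₀ ∈ Set.Ioo (0:ℝ) (Real.pi/2)) :
    ∀ x ∈ Set.Ioo 0 x₀,
      Real.exp (-(-Real.log (x₀ / Real.tan x₀) / x₀^2) * x^2) < x / Real.tan x := by
  intro x hx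
  obtain ⟨hx00, hx0π⟩ := hx₀
  obtain ⟨hx0, hxx₀⟩ := hx
  have hxI : x ∈ Set.Ioo 0 (Real.pi/2) := ⟨hx0, by linarith⟩
  obtain ⟨hcos, hsin, htan, hsin2⟩ := basic_facts hxI
  obtain ⟨hcos₀, hsin₀, htan₀, hsin2₀⟩ := basic_facts ⟨hx00, hx0π⟩
  have hg := gf_strictMono hxI ⟨hx00, hx0π⟩ hxx₀
  unfold gf at hg
  rw [div_lt_div_iff₀ (by positivity) (by positivity)] at hg
  have hrw : x / Real.tan x = Real.exp (Real.log x - Real.log (Real.tan x)) := by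
    rw [Real.exp_sub, Real.exp_log hx0, Real.exp_log htan]
  rw [hrw, Real.exp_lt_exp]
  rw [Real.log_div hx00.ne' htan₀.ne']
  have hx₀sq : (0:ℝ) < x₀^2 := by positivity
  have heq : -(-(Real.log x₀ - Real.log (Real.tan x₀)) / x₀ ^ 2) * x ^ 2
      = (Real.log x₀ - Real.log (Real.tan x₀)) * x ^ 2 / x₀ ^ 2 := by ring
  rw [heq, div_lt_iff₀ hx₀sq]
  nlinarith
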